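/- Let L be a restricted Lie algebra over a field of characteristic p > 0 in which every element of the derived subalgebra is p-algebraic, and suppose every element of L is p-algebraic and dim [L, x] < ∞ for all x ∈ L (i.e., L = Δ(L)). Then L is locally finite-dimensional: every finitely generated restricted subalgebra of L is finite-dimensional. -/

import Mathlib

/-- A restricted Lie algebra over a field `F` of characteristic `p`: a Lie algebra
equipped with a `p`-mapping `x ↦ x^[p]` satisfying `(a • x)^[p] = aᵖ • x^[p]`,
`ad (x^[p]) = (ad x)ᵖ`, and a Jacobson-type formula: `(x+y)^[p] - x^[p] - y^[p]` is a
sum of Lie commutators of elements of the Lie subalgebra generated by `x` and `y`. -/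
class RestrictedLie (p : ℕ) (F : Type*) (L : Type*) [Field F] [LieRing L]
    [LieAlgebra F L] : Type _ where
  pmap : L → L
  pmap_smul : ∀ (a : F) (x : L), pmap (a • x) = a ^ p • pmap x
  ad_pmap : ∀ x y : L, ⁅pmap x, y⁆ = ((LieAlgebra.ad F L x) ^ p) y
  pmap_add_sub_mem : ∀ x y : L,
    pmap (x + y) - pmap x - pmap y ∈ Submodule.span F
      {z : L | ∃ u ∈ LieSubalgebra.lieSpan F L {x, y},
        ∃ v ∈ LieSubalgebra.lieSpan F L {x, y}, z = ⁅u, v⁆}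

namespace RestrictedLie

variable (p : ℕ) (F : Type*) {L : Type*} [Field F] [LieRing L] [LieAlgebra F L]
  [RestrictedLie p F L]

/-- An element `x` is `p`-nilpotent if some iterate of the `p`-mapping kills it. -/
def IsPNilpotent (x : L) : Prop :=
  ∃ n : ℕ, (pmap (p := p) (F := F))^[n] x = 0

/-- A subset is `p`-nil if all of its elements are `p`-nilpotent. -/
def IsPNil (S : Set L) : Prop := ∀ x ∈ S, IsPNilpotent p F x

/-- A Lie ideal is restricted if it is closed under the `p`-mapping. -/
def IsRestrictedIdeal (I : LieIdeal F L) : Prop :=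
  ∀ x ∈ I, pmap (p := p) (F := F) x ∈ I

/-- The restricted subalgebra generated by a set: the smallest Lie subalgebra containing
the set and closed under the `p`-mapping. -/
def restrictedSpan (s : Set L) : LieSubalgebra F L :=
  sInf {K : LieSubalgebra F L | s ⊆ K ∧ ∀ x ∈ K, pmap (p := p) (F := F) x ∈ K}

end RestrictedLie

/-- `ι : L → A` exhibits the associative algebra `A` as the restricted enveloping algebra
`u(L)` of the restricted Lie algebra `L`: `ι` respects brackets and the `p`-mapping, and
is universal among such maps into associative `F`-algebras; moreover `ι` is injective
(by the PBW theorem). -/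
structure IsRestrictedEnvelope (p : ℕ) (F : Type*) {L A : Type*} [Field F] [LieRing L]
    [LieAlgebra F L] [RestrictedLie p F L] [Ring A] [Algebra F A]
    (ι : L →ₗ[F] A) : Prop where
  map_lie : ∀ x y : L, ι ⁅x, y⁆ = ι x * ι y - ι y * ι x
  map_pmap : ∀ x : L, ι (RestrictedLie.pmap (p := p) (F := F) x) = (ι x) ^ p
  injective : Function.Injective ι
  universal : ∀ (B : Type*) [Ring B] [Algebra F B] (f : L →ₗ[F] B),
    (∀ x y : L, f ⁅x, y⁆ = f x * f y - f y * f x) →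
    (∀ x : L, f (RestrictedLie.pmap (p := p) (F := F) x) = (f x) ^ p) →
    ∃! g : A →ₐ[F] B, ∀ x : L, g (ι x) = f x


namespace RestrictedLie

variable {p : ℕ} {F : Type*} {L : Type*} [Field F] [LieRing L] [LieAlgebra F L]
  [RestrictedLie p F L]

lemma mem_restrictedSpan' {s : Set L} {x : L} (hx : x ∈ s) : x ∈ restrictedSpan p F s := by
  have : x ∈ (↑(restrictedSpan p F s) : Set L) := by
    rw [restrictedSpan, LieSubalgebra.coe_sInf]
    exact Set.mem_iInter₂.mpr fun K hK => hK.1 hx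
  exact this

lemma restrictedSpan_le' {s : Set L} {K : LieSubalgebra F L} (h1 : s ⊆ K)
    (h2 : ∀ x ∈ K, pmap (p := p) (F := F) x ∈ K) : restrictedSpan p F s ≤ K :=
  sInf_le ⟨h1, h2⟩

lemma pmap_mem_restrictedSpan' {s : Set L} {x : L} (hx : x ∈ restrictedSpan p F s) :
    pmap (p := p) (F := F) x ∈ restrictedSpan p F s := by
  have : pmap (p := p) (F := F) x ∈ (↑(restrictedSpan p F s) : Set L) := by
    rw [restrictedSpan, LieSubalgebra.coe_sInf]
    refine Set.mem_iInter₂.mpr fun K hK => hK.2 x ?_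
    exact restrictedSpan_le' hK.1 hK.2 hx
  exact this

lemma pmap_zero' (hp : p ≠ 0) : pmap (p := p) (F := F) (0 : L) = 0 := by
  have h := pmap_smul (p := p) (F := F) (0 : F) (0 : L)
  simpa [zero_pow hp] using h

end RestrictedLie

open RestrictedLie in
/-- Let `L` be a restricted Lie algebra over a field of characteristic `p > 0` in which
every element of the derived subalgebra is `p`-algebraic, every element of `L` is
`p`-algebraic, and `dim [L, x] < ∞` for every `x` (i.e. `L = Δ(L)`).  Then `L` is
locally finite-dimensional: every finitely generated restricted subalgebra is
finite-dimensional. -/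
theorem locally_finite_of_delta_p_algebraic
    {p : ℕ} {F L : Type*} [Field F] [LieRing L] [LieAlgebra F L] [RestrictedLie p F L]
    (hp : p.Prime) [CharP F p]
    (hder : ∀ x ∈ LieAlgebra.derivedSeries F L 1,
      Module.Finite F (restrictedSpan p F ({x} : Set L)))
    (halg : ∀ x : L, Module.Finite F (restrictedSpan p F ({x} : Set L)))
    (hΔ : ∀ x : L, Module.Finite F (LinearMap.range (LieAlgebra.ad F L x))) :
    ∀ s : Finset L, Module.Finite F (restrictedSpan p F (s : Set L)) := by
    classical
  intro s
  set H : LieSubalgebra F L := restrictedSpan p F (s : Set L) with hHdef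
  have hsH : (s : Set L) ⊆ H := fun x hx => mem_restrictedSpan' hx
  have hHp : ∀ x ∈ H, pmap (p := p) (F := F) x ∈ H := fun x hx => pmap_mem_restrictedSpan' hx
  -- the finite-dimensional space R containing all brackets with first entry in H
  set R : Submodule F L := s.sup (fun x => LinearMap.range (LieAlgebra.ad F L x)) with hRdef
  haveI : ∀ x : L, Module.Finite F (LinearMap.range (LieAlgebra.ad F L x)) := hΔ
  haveI hRfin : FiniteDimensional F R := Submodule.finiteDimensional_finset_sup s _
  -- the controlling subalgebra H'
  obtain ⟨q, hq⟩ : ∃ q, p = q + 1 := ⟨p - 1, (Nat.succ_pred_eq_of_pos hp.pos).symm⟩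
  set H' : LieSubalgebra F L :=
    { carrier := {y : L | ∀ z : L, ⁅y, z⁆ ∈ R}
      add_mem' := fun {a b} ha hb z => by
        rw [add_lie]; exact R.add_mem (ha z) (hb z)
      zero_mem' := fun z => by rw [zero_lie]; exact R.zero_mem
      smul_mem' := fun c a ha z => by rw [smul_lie]; exact R.smul_mem c (ha z)
      lie_mem' := fun {a b} ha hb z => by
        rw [lie_lie]; exact R.sub_mem (ha _) (hb _) } with hH'def
  have hmemH' : ∀ y : L, y ∈ H' ↔ ∀ z : L, ⁅y, z⁆ ∈ R := fun y => Iff.rfl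
  have hHH' : H ≤ H' := by
    rw [hHdef]
    apply restrictedSpan_le'
    · intro x hx
      rw [SetLike.mem_coe, hmemH']
      intro z
      exact Finset.le_sup (f := fun x => LinearMap.range (LieAlgebra.ad F L x)) hx ⟨z, rfl⟩
    · intro x hx
      rw [hmemH'] at hx ⊢
      intro z
      rw [ad_pmap]
      have h2 : ((LieAlgebra.ad F L x) ^ p) z
          = ⁅x, ((LieAlgebra.ad F L x) ^ q) z⁆ := by
        rw [hq, pow_succ']
        rfl
      rw [h2]
      exact hx _
  -- the derived space of H
  set RH : Submodule F L := Submodule.span F {z : L | ∃ u ∈ H, ∃ v ∈ H, z = ⁅u, v⁆} with hRHdef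
  have hRH_le_R : RH ≤ R := Submodule.span_le.mpr (by
    rintro z ⟨u, hu, v, hv, rfl⟩
    exact (hmemH' u).mp (hHH' hu) v)
  have hRH_le_H : RH ≤ H.toSubmodule := Submodule.span_le.mpr (by
    rintro z ⟨u, hu, v, hv, rfl⟩
    exact H.lie_mem hu hv)
  haveI hRHfin : FiniteDimensional F RH := Submodule.finiteDimensional_of_le hRH_le_R
  obtain ⟨t, ht⟩ : RH.FG := (Submodule.fg_iff_finiteDimensional RH).mpr hRHfin
  have htRH : (t : Set L) ⊆ RH := ht ▸ Submodule.subset_span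
  -- Jacobson additivity modulo RH
  have hJ : ∀ u ∈ H, ∀ v ∈ H,
      pmap (p := p) (F := F) (u + v) - pmap (p := p) (F := F) u - pmap (p := p) (F := F) v ∈ RH := by
    intro u hu v hv
    have hspan : LieSubalgebra.lieSpan F L {u, v} ≤ H := by
      apply LieSubalgebra.lieSpan_le.mpr
      rintro w (rfl | hw)
      · exact hu
      · simpa using (Set.mem_singleton_iff.mp hw) ▸ hv
    refine Submodule.span_le.mpr ?_ (RestrictedLie.pmap_add_sub_mem u v)
    rintro z ⟨u', hu', v', hv', rfl⟩
    exact Submodule.subset_span ⟨u', hspan hu', v', hspan hv', rfl⟩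
  -- the building blocks
  set A : Submodule F L := s.sup (fun x => (restrictedSpan p F ({x} : Set L)).toSubmodule)
    with hAdef
  set P : Submodule F L := t.sup (fun r => (restrictedSpan p F ({r} : Set L)).toSubmodule)
    with hPdef
  haveI hfinsingle : ∀ x : L, FiniteDimensional F (restrictedSpan p F ({x} : Set L)).toSubmodule :=
    fun x => halg x
  set V : Submodule F L := A ⊔ RH ⊔ P with hVdef
  have hA_le_V : A ≤ V := le_trans le_sup_left le_sup_left
  have hRH_le_V : RH ≤ V := le_trans le_sup_right le_sup_left
  have hP_le_V : P ≤ V := le_sup_right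
  -- V ⊆ H
  have hsingle_le_H : ∀ x ∈ H, (restrictedSpan p F ({x} : Set L)).toSubmodule ≤ H.toSubmodule := by
    intro x hx
    rw [LieSubalgebra.toSubmodule_le_toSubmodule]
    exact restrictedSpan_le' (by simpa using hx) hHp
  have hA_le_H : A ≤ H.toSubmodule :=
    Finset.sup_le fun x hx => hsingle_le_H x (hsH hx)
  have hP_le_H : P ≤ H.toSubmodule :=
    Finset.sup_le fun r hr => hsingle_le_H r (hRH_le_H (htRH hr))
  have hV_le_H : V ≤ H.toSubmodule := sup_le (sup_le hA_le_H hRH_le_H) hP_le_H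
  -- pmap-closure of V
  have hpmapV : ∀ y ∈ V, pmap (p := p) (F := F) y ∈ V := by
    set W : Submodule F L :=
      { carrier := {y : L | y ∈ H ∧ pmap (p := p) (F := F) y ∈ V}
        zero_mem' := ⟨H.zero_mem, by rw [pmap_zero' hp.ne_zero]; exact V.zero_mem⟩
        add_mem' := fun {a b} ha hb => ⟨H.add_mem ha.1 hb.1, by
          have hd := hJ a ha.1 b hb.1
          have heq : pmap (p := p) (F := F) (a + b)
              = (pmap (p := p) (F := F) (a + b) - pmap (p := p) (F := F) a
                  - pmap (p := p) (F := F) b) + pmap (p := p) (F := F) a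
                  + pmap (p := p) (F := F) b := by abel
          rw [heq]
          exact V.add_mem (V.add_mem (hRH_le_V hd) ha.2) hb.2⟩
        smul_mem' := fun c a ha => ⟨H.smul_mem c ha.1, by
          rw [pmap_smul]; exact V.smul_mem _ ha.2⟩ } with hWdef
    have hmemW : ∀ y : L, y ∈ W ↔ (y ∈ H ∧ pmap (p := p) (F := F) y ∈ V) := fun y => Iff.rfl
    have hAW : A ≤ W := Finset.sup_le (fun x hx => by
      intro y hy
      rw [hmemW]
      refine ⟨hsingle_le_H x (hsH hx) hy, ?_⟩
      exact hA_le_V (Finset.le_sup (f := fun x => (restrictedSpan p F ({x} : Set L)).toSubmodule)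
        hx (pmap_mem_restrictedSpan' hy)))
    have hPW : P ≤ W := Finset.sup_le (fun r hr => by
      intro y hy
      rw [hmemW]
      refine ⟨hsingle_le_H r (hRH_le_H (htRH hr)) hy, ?_⟩
      exact hP_le_V (Finset.le_sup (f := fun r => (restrictedSpan p F ({r} : Set L)).toSubmodule)
        hr (pmap_mem_restrictedSpan' hy)))
    have hRHW : RH ≤ W := by
      rw [← ht]
      apply Submodule.span_le.mpr
      intro r hr
      rw [SetLike.mem_coe, hmemW]
      refine ⟨hRH_le_H (htRH hr), ?_⟩
      exact hP_le_V (Finset.le_sup (f := fun r => (restrictedSpan p F ({r} : Set L)).toSubmodule)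
        hr (pmap_mem_restrictedSpan' (mem_restrictedSpan' rfl)))
    intro y hy
    exact ((sup_le (sup_le hAW hRHW) hPW) hy).2
  -- the finite-dimensional restricted subalgebra K
  set K : LieSubalgebra F L :=
    { V with
      lie_mem' := fun {a b} ha hb => by
        exact hRH_le_V (Submodule.subset_span ⟨a, hV_le_H ha, b, hV_le_H hb, rfl⟩) } with hKdef
  have hmemK : ∀ y : L, y ∈ K ↔ y ∈ V := fun y => Iff.rfl
  have hsK : (s : Set L) ⊆ K := by
    intro x hx
    rw [SetLike.mem_coe, hmemK]
    exact hA_le_V (Finset.le_sup (f := fun x => (restrictedSpan p F ({x} : Set L)).toSubmodule)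
      hx (mem_restrictedSpan' rfl))
  have hKle : restrictedSpan p F (s : Set L) ≤ K :=
    restrictedSpan_le' hsK (fun x hx => (hmemK _).mpr (hpmapV x ((hmemK x).mp hx)))
  haveI : FiniteDimensional F A := Submodule.finiteDimensional_finset_sup _ _
  haveI : FiniteDimensional F P := Submodule.finiteDimensional_finset_sup _ _
  haveI : FiniteDimensional F V := by
    rw [hVdef]
    exact Submodule.finiteDimensional_sup _ _
  have hsub : (restrictedSpan p F (s : Set L)).toSubmodule ≤ V := by
    rw [← LieSubalgebra.toSubmodule_le_toSubmodule] at hKle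
    exact hKle
  haveI : FiniteDimensional F (restrictedSpan p F (s : Set L)).toSubmodule :=
    Submodule.finiteDimensional_of_le hsub
  exact ‹FiniteDimensional F (restrictedSpan p F ((s : Finset L) : Set L)).toSubmodule›
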